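/- Let M = (R,T,c) and M' = (R,T,c') be MRTA instances on the same robots and tasks whose cost functions c and c' are both injective on E and differ only in the cost of a single edge e ∈ E. Let (W, a) be the output of the SSI auction on M, with u_k the second-best edge of round k. Then the SSI auction on M' outputs the same winning-edge list and assignment function as the SSI auction on M (and hence Assign, which depends only on this output, returns the same plan) if any of the following holds: (1) e does not appear in W and c'(e) > max_{k ∈ B_e} c(w_k); (2) e = w_K appears in W, |B_e| = 1, and c(u_K) > c'(e) ≥ 0; (3) e = w_K appears in W, |B_e| > 1, and c(u_K) > c'(e) > max_{k ∈ B_e ∖ {K}} c(w_k). -/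
import Mathlib


open Finset

/-- The set of tasks assigned in the bid rounds with (0-based) index `< k`. -/
def auctionAssigned {V : Type*} [DecidableEq V] {n : ℕ} (w : Fin n → V × V) (k : ℕ) :
    Finset V :=
  (Finset.univ.filter fun i : Fin n => (i : ℕ) < k).image fun i => (w i).2

/-- `w` is the output of the SSI auction for the instance `(R, T, c)`. -/
def IsAuction {V : Type*} [DecidableEq V] (R T : Finset V) (c : V → V → ℝ) {n : ℕ}
    (w : Fin n → V × V) : Prop :=
  ∀ k : Fin n,
    (w k).1 ∈ R ∪ auctionAssigned w (k : ℕ) ∧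
    (w k).2 ∈ T \ auctionAssigned w (k : ℕ) ∧
    ∀ s ∈ R ∪ auctionAssigned w (k : ℕ), ∀ t ∈ T \ auctionAssigned w (k : ℕ),
      (s, t) ≠ w k → c (w k).1 (w k).2 < c s t

/-- `c` is injective on the edge set of the complete graph. -/
def InjOnEdges {V : Type*} (c : V → V → ℝ) : Prop :=
  ∀ x y x' y' : V, x ≠ y → x' ≠ y' → c x y = c x' y' →
    (x = x' ∧ y = y') ∨ (x = y' ∧ y = x')

/-- The assignment function of the auction: `a v = k` if `v` is the task assigned
in (1-based) round `k`, and `a v = 0` if `v` is never assigned (e.g. a robot). -/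
def assignFn {V : Type*} [DecidableEq V] {n : ℕ} (w : Fin n → V × V) (v : V) : ℕ :=
  (Finset.univ.filter fun k : Fin n => (w k).2 = v).sup fun k => (k : ℕ) + 1

/-- The set `B_e` of (1-based) bid rounds considering the edge `e = {x,y}`:
`B_e = {k : min(a x, a y) < k ≤ max(a x, a y)}`. -/
def bidRounds {V : Type*} (a : V → ℕ) (x y : V) : Finset ℕ :=
  Finset.Ioc (min (a x) (a y)) (max (a x) (a y))


/-- `p` is the second-best edge of round `K`: it is an edge considered in round `K`,
distinct from the winning edge `w K`, of minimal cost among all such edges. -/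
def IsSecondBest {V : Type*} [DecidableEq V] (c : V → V → ℝ) {n : ℕ}
    (w : Fin n → V × V) (K : Fin n) (p : V × V) : Prop :=
  p.1 ≠ p.2 ∧ p ≠ w K ∧ (p.2, p.1) ≠ w K ∧
  ((K : ℕ) + 1) ∈ bidRounds (assignFn w) p.1 p.2 ∧
  ∀ x y : V, x ≠ y → ((K : ℕ) + 1) ∈ bidRounds (assignFn w) x y →
    (x, y) ≠ w K → (y, x) ≠ w K → c p.1 p.2 ≤ c x y

section H
variable {V : Type*} [DecidableEq V] {n : ℕ}

omit [DecidableEq V] in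
lemma bidRounds_comm (a : V → ℕ) (p q : V) : bidRounds a p q = bidRounds a q p := by
  simp [bidRounds, min_comm, max_comm]

lemma auctionAssigned_mono (w : Fin n → V × V) {k K : ℕ} (h : k ≤ K) :
    auctionAssigned w k ⊆ auctionAssigned w K := by
  apply Finset.image_subset_image
  intro i hi
  simp only [Finset.mem_filter, Finset.mem_univ, true_and] at hi ⊢
  omega

lemma mem_auctionAssigned (w : Fin n → V × V) {i : Fin n} {k : ℕ} (h : (i : ℕ) < k) :
    (w i).2 ∈ auctionAssigned w k := by
  simp only [auctionAssigned, Finset.mem_image, Finset.mem_filter, Finset.mem_univ, true_and]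
  exact ⟨i, h, rfl⟩

variable {R T : Finset V} {c : V → V → ℝ} {w : Fin T.card → V × V}

lemma assigned_sub_T (hw : IsAuction R T c w) (k : ℕ) : auctionAssigned w k ⊆ T := by
  intro v hv
  simp only [auctionAssigned, Finset.mem_image, Finset.mem_filter, Finset.mem_univ, true_and] at hv
  obtain ⟨i, -, hi⟩ := hv
  exact hi ▸ (Finset.mem_sdiff.mp (hw i).2.1).1

lemma snd_inj (hw : IsAuction R T c w) {i j : Fin T.card} (h : (w i).2 = (w j).2) : i = j := by
  by_contra hne
  have hne' : (i : ℕ) ≠ (j : ℕ) := fun hh => hne (Fin.ext hh)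
  rcases hne'.lt_or_gt with hlt | hlt
  · exact (Finset.mem_sdiff.mp (hw j).2.1).2 (h ▸ mem_auctionAssigned w hlt)
  · exact (Finset.mem_sdiff.mp (hw i).2.1).2 (h ▸ mem_auctionAssigned w hlt)

lemma assignFn_snd (hw : IsAuction R T c w) (k : Fin T.card) :
    assignFn w ((w k).2) = (k : ℕ) + 1 := by
  unfold assignFn
  apply le_antisymm
  · apply Finset.sup_le
    intro j hj
    simp only [Finset.mem_filter, Finset.mem_univ, true_and] at hj
    have := snd_inj hw hj
    omega
  · exact Finset.le_sup (f := fun j : Fin T.card => (j : ℕ) + 1) (Finset.mem_filter.mpr ⟨Finset.mem_univ k, rfl⟩)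

lemma assignFn_robot (hw : IsAuction R T c w) (hdisj : Disjoint R T) {r : V} (hr : r ∈ R) :
    assignFn w r = 0 := by
  unfold assignFn
  apply Nat.le_zero.mp
  apply Finset.sup_le
  intro j hj
  simp only [Finset.mem_filter, Finset.mem_univ, true_and] at hj
  exact absurd hr (Finset.disjoint_right.mp hdisj (hj ▸ (Finset.mem_sdiff.mp (hw j).2.1).1))

lemma task_assigned (hw : IsAuction R T c w) {t : V} (ht : t ∈ T) :
    ∃ k : Fin T.card, (w k).2 = t := by
  have hsub : auctionAssigned w T.card ⊆ T := assigned_sub_T hw _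
  have hcard : T.card ≤ (auctionAssigned w T.card).card := by
    unfold auctionAssigned
    rw [Finset.filter_true_of_mem (fun i _ => i.isLt),
      Finset.card_image_of_injOn (fun i _ j _ h => snd_inj hw h)]
    simp
  have heq := Finset.eq_of_subset_of_card_le hsub hcard
  rw [← heq] at ht
  simp only [auctionAssigned, Finset.mem_image, Finset.mem_filter, Finset.mem_univ, true_and] at ht
  obtain ⟨i, -, hi⟩ := ht
  exact ⟨i, hi⟩

lemma mem_assigned_iff (hw : IsAuction R T c w) {t : V} (ht : t ∈ T) (k : ℕ) :
    t ∈ auctionAssigned w k ↔ assignFn w t ≤ k := by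
  obtain ⟨i, hi⟩ := task_assigned hw ht
  subst hi
  rw [assignFn_snd hw i]
  constructor
  · intro h
    simp only [auctionAssigned, Finset.mem_image, Finset.mem_filter, Finset.mem_univ,
      true_and] at h
    obtain ⟨j, hj, hj2⟩ := h
    have := snd_inj hw hj2
    subst this
    omega
  · intro h
    exact mem_auctionAssigned w (by omega)

lemma candidate_bidRound (hw : IsAuction R T c w) (hdisj : Disjoint R T) {k : Fin T.card}
    {s t : V} (hs : s ∈ R ∪ auctionAssigned w (k : ℕ)) (ht : t ∈ T \ auctionAssigned w (k : ℕ)) :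
    ((k : ℕ) + 1) ∈ bidRounds (assignFn w) s t := by
  have has : assignFn w s ≤ (k : ℕ) := by
    rcases Finset.mem_union.mp hs with h | h
    · rw [assignFn_robot hw hdisj h]; omega
    · exact (mem_assigned_iff hw (assigned_sub_T hw _ h) _).mp h
  have hat : (k : ℕ) < assignFn w t := by
    rcases Finset.mem_sdiff.mp ht with ⟨ht1, ht2⟩
    by_contra hle
    exact ht2 ((mem_assigned_iff hw ht1 _).mpr (by omega))
  simp only [bidRounds, Finset.mem_Ioc]
  constructor
  · exact lt_of_le_of_lt (min_le_left _ _) (by omega)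
  · exact le_trans hat (le_max_right _ _)

lemma candidate_ne (hdisj : Disjoint R T) {k : ℕ} {s t : V}
    (hs : s ∈ R ∪ auctionAssigned w k) (ht : t ∈ T \ auctionAssigned w k) : s ≠ t := by
  rintro rfl
  rcases Finset.mem_union.mp hs with h | h
  · exact Finset.disjoint_left.mp hdisj h (Finset.mem_sdiff.mp ht).1
  · exact (Finset.mem_sdiff.mp ht).2 h

lemma not_rewin (hw : IsAuction R T c w) (hdisj : Disjoint R T) {k K : Fin T.card}
    (hlt : (k : ℕ) < (K : ℕ)) {x y : V}
    (hk : w k = (x, y) ∨ w k = (y, x)) (hK : w K = (x, y) ∨ w K = (y, x)) : False := by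
  have h2k : (w k).2 ∈ auctionAssigned w (K : ℕ) := mem_auctionAssigned w hlt
  have hK2 := Finset.mem_sdiff.mp (hw K).2.1
  have hk1 := (hw k).1
  have hmono := auctionAssigned_mono w (le_of_lt hlt)
  rcases hk with hk' | hk' <;> rcases hK with hK' | hK' <;>
      rw [hk'] at h2k hk1 <;> rw [hK'] at hK2 <;> simp only at h2k hk1 hK2
  · exact hK2.2 h2k
  · rcases Finset.mem_union.mp hk1 with h | h
    · exact Finset.disjoint_left.mp hdisj h hK2.1
    · exact hK2.2 (hmono h)
  · rcases Finset.mem_union.mp hk1 with h | h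
    · exact Finset.disjoint_left.mp hdisj h hK2.1
    · exact hK2.2 (hmono h)
  · exact hK2.2 h2k

lemma win_round_unique (hw : IsAuction R T c w) (hdisj : Disjoint R T) {k K : Fin T.card}
    {x y : V} (hk : w k = (x, y) ∨ w k = (y, x)) (hK : w K = (x, y) ∨ w K = (y, x)) : k = K := by
  by_contra hne
  have hne' : (k : ℕ) ≠ (K : ℕ) := fun hh => hne (Fin.ext hh)
  rcases hne'.lt_or_gt with hlt | hlt
  · exact not_rewin hw hdisj hlt hk hK
  · exact not_rewin hw hdisj hlt hK hk

end H

theorem statement8 {V : Type*} [Fintype V] [DecidableEq V] (R T : Finset V)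
    (hdisj : Disjoint R T) (hunion : R ∪ T = Finset.univ) (hcard : 3 ≤ Fintype.card V)
    (c c' : V → V → ℝ)
    (hsymm : ∀ x y, c x y = c y x) (hnonneg : ∀ x y, 0 ≤ c x y) (hinj : InjOnEdges c)
    (hsymm' : ∀ x y, c' x y = c' y x) (hnonneg' : ∀ x y, 0 ≤ c' x y) (hinj' : InjOnEdges c')
    (w : Fin T.card → V × V) (hw : IsAuction R T c w)
    (u : Fin T.card → V × V) (hu : ∀ k, IsSecondBest c w k (u k))
    -- `c` and `c'` differ only in the cost of the single edge `e = {x,y}`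
    (x y : V) (hxy : x ≠ y)
    (hsame : ∀ p q : V, (p, q) ≠ (x, y) → (p, q) ≠ (y, x) → c' p q = c p q)
    (hcases :
      -- (1) `e` does not appear in `W` and `c'(e) > max_{k ∈ B_e} c(w_k)`
      ((∀ k : Fin T.card, w k ≠ (x, y) ∧ w k ≠ (y, x)) ∧
        (∀ k : Fin T.card, ((k : ℕ) + 1) ∈ bidRounds (assignFn w) x y →
          c (w k).1 (w k).2 < c' x y)) ∨
      -- (2) `e = w K` appears in `W`, `|B_e| = 1`, and `c(u_K) > c'(e) ≥ 0`
      (∃ K : Fin T.card, (w K = (x, y) ∨ w K = (y, x)) ∧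
        (bidRounds (assignFn w) x y).card = 1 ∧
        0 ≤ c' x y ∧ c' x y < c (u K).1 (u K).2) ∨
      -- (3) `e = w K` appears in `W`, `|B_e| > 1`, and
      -- `c(u_K) > c'(e) > max_{k ∈ B_e ∖ {K}} c(w_k)`
      (∃ K : Fin T.card, (w K = (x, y) ∨ w K = (y, x)) ∧
        1 < (bidRounds (assignFn w) x y).card ∧
        c' x y < c (u K).1 (u K).2 ∧
        (∀ k : Fin T.card, ((k : ℕ) + 1) ∈ bidRounds (assignFn w) x y → k ≠ K →
          c (w k).1 (w k).2 < c' x y))) :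
    -- the auction on `c'` outputs the same winning-edge list and assignment function
    -- (hence `Assign`, which depends only on this output, returns the same plan)
    IsAuction R T c' w := by
  intro k
  obtain ⟨hk1, hk2, hkmin⟩ := hw k
  refine ⟨hk1, hk2, ?_⟩
  intro s hs t ht hne
  have hst : s ≠ t := candidate_ne hdisj hs ht
  have hbid : ((k : ℕ) + 1) ∈ bidRounds (assignFn w) s t := candidate_bidRound hw hdisj hs ht
  by_cases hse : (s, t) = (x, y) ∨ (s, t) = (y, x)
  · -- competitor is the modified edge e
    have hwk_ne : w k ≠ (x, y) ∧ w k ≠ (y, x) := by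
      constructor <;> intro hwk <;> rw [hwk] at hk1 hk2 hne <;>
        rcases hse with h | h <;> rw [Prod.mk.injEq] at h <;> obtain ⟨rfl, rfl⟩ := h
      · exact hne rfl
      · exact candidate_ne hdisj hs hk2 rfl
      · exact candidate_ne hdisj hs hk2 rfl
      · exact hne rfl
    have hcw : c' (w k).1 (w k).2 = c (w k).1 (w k).2 := by
      apply hsame <;> rw [Prod.mk.eta] <;> [exact hwk_ne.1; exact hwk_ne.2]
    have hcst : c' s t = c' x y := by
      rcases hse with h | h <;> rw [Prod.mk.injEq] at h <;> rw [h.1, h.2] <;>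
        first | rfl | exact hsymm' y x
    have hbidxy : ((k : ℕ) + 1) ∈ bidRounds (assignFn w) x y := by
      rcases hse with h | h <;> rw [Prod.mk.injEq] at h <;> rw [h.1, h.2] at hbid <;>
        first | exact hbid | rwa [bidRounds_comm]
    rw [hcw, hcst]
    rcases hcases with ⟨h1, h2⟩ | ⟨K, hK, hcard1, _, _⟩ | ⟨K, hK, _, _, h4⟩
    · exact h2 k hbidxy
    · exfalso
      have hbidK : ((K : ℕ) + 1) ∈ bidRounds (assignFn w) x y := by
        have hc := candidate_bidRound hw hdisj (hw K).1 (hw K).2.1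
        rcases hK with h | h <;> rw [h] at hc
        · exact hc
        · rwa [bidRounds_comm]
      obtain ⟨a, ha⟩ := Finset.card_eq_one.mp hcard1
      rw [ha, Finset.mem_singleton] at hbidxy hbidK
      have : k = K := Fin.ext (by omega)
      subst this
      rcases hK with h | h
      · exact hwk_ne.1 h
      · exact hwk_ne.2 h
    · refine h4 k hbidxy fun hkK => ?_
      subst hkK
      rcases hK with h | h
      · exact hwk_ne.1 h
      · exact hwk_ne.2 h
  · -- competitor is not e
    push_neg at hse
    have hcst : c' s t = c s t := hsame s t hse.1 hse.2
    by_cases hwke : w k = (x, y) ∨ w k = (y, x)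
    · -- the winner of this round is e
      have hrev : (t, s) ≠ w k := by
        intro hts
        rw [← hts] at hk2
        exact candidate_ne hdisj hs hk2 rfl
      rcases hcases with ⟨h1, _⟩ | ⟨K, hK, _, _, hlt⟩ | ⟨K, hK, _, hlt, _⟩
      · rcases hwke with h | h
        · exact absurd h (h1 k).1
        · exact absurd h (h1 k).2
      all_goals {
        have hkK : k = K := win_round_unique hw hdisj hwke hK
        subst hkK
        obtain ⟨-, -, -, -, humin⟩ := hu k
        have h2 : c (u k).1 (u k).2 ≤ c s t := humin s t hst hbid hne hrev
        have hcw : c' (w k).1 (w k).2 = c' x y := by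
          rcases hK with h | h <;> rw [h] <;> first | rfl | exact hsymm' y x
        rw [hcw, hcst]
        linarith }
    · -- neither is e
      push_neg at hwke
      have hcw : c' (w k).1 (w k).2 = c (w k).1 (w k).2 := by
        apply hsame <;> rw [Prod.mk.eta] <;> [exact hwke.1; exact hwke.2]
      rw [hcw, hcst]
      exact hkmin s hs t ht hne
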